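/- Let G be a graph of order n with vertex connectivity c ≤ n-2, and let G_{n,c} be the graph obtained from K_{n-1} by adding one vertex adjacent to exactly c vertices of K_{n-1}. If G is not isomorphic to G_{n,c}, then N(G) < N(G_{n,c}). -/

import Mathlib

open SimpleGraph

/-- Number of nonempty vertex subsets inducing a connected subgraph. -/
noncomputable def numConnSub {V : Type*} [Fintype V] (G : SimpleGraph V) : ℕ :=
  Set.ncard {S : Set V | S.Nonempty ∧ (G.induce S).Connected}

/-- Number of vertex subsets containing `u` inducing a connected subgraph. -/
noncomputable def numConnSubAt {V : Type*} [Fintype V] (G : SimpleGraph V) (u : V) : ℕ :=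
  Set.ncard {S : Set V | u ∈ S ∧ (G.induce S).Connected}

/-- The graph `G_{n,x}` with `n = m + 1`: a complete graph on `Fin m` together with an extra
vertex `none` adjacent to exactly `x` of its vertices. -/
def Gnd (m x : ℕ) : SimpleGraph (Option (Fin m)) :=
  SimpleGraph.fromRel (fun a b =>
    match a, b with
    | some _, some _ => True
    | none, some i => i.val < x
    | some i, none => i.val < x
    | none, none => False)

/-- The vertex connectivity: the minimum size of a vertex set whose removal disconnects `G`. -/
noncomputable def vertConn {V : Type*} [Fintype V] (G : SimpleGraph V) : ℕ :=
  sInf {k | ∃ s : Finset V, s.card = k ∧ ¬ (G.induce ((↑s : Set V)ᶜ)).Connected}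
section Aux
open Set
variable {V : Type*} [Fintype V]
set_option linter.unusedSectionVars false

lemma ncard_subsets (B : Set V) : {U : Set V | U ⊆ B}.ncard = 2 ^ B.ncard := by
  classical
  have e : {U : Set V | U ⊆ B} ≃ Set B := by
    refine ⟨fun U => (Subtype.val ⁻¹' (U : Set V)), fun W => ⟨Subtype.val '' W, by
      rintro u ⟨w, _, rfl⟩; exact w.2⟩, ?_, ?_⟩
    · rintro ⟨U, hU⟩
      ext u
      simp only [Set.mem_image, Set.mem_preimage, Subtype.exists, exists_and_right,
        exists_eq_right]
      constructor
      · rintro ⟨h, hu⟩; exact hu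
      · intro hu; exact ⟨hU hu, hu⟩
    · intro W
      ext w
      simp [Subtype.val_injective.mem_set_image]
  have h1 : {U : Set V | U ⊆ B}.ncard = Nat.card (Set B) := by
    rw [← Nat.card_coe_set_eq]
    exact Nat.card_congr e
  rw [h1]
  have e2 : Set B ≃ (B → Bool) := Equiv.arrowCongr (Equiv.refl _) Equiv.propEquivBool
  rw [Nat.card_congr e2, Nat.card_fun]
  rw [Nat.card_coe_set_eq]; norm_num

lemma ncard_nonempty_subsets (B : Set V) :
    {U : Set V | U ⊆ B ∧ U.Nonempty}.ncard + 1 = 2 ^ B.ncard := by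
  classical
  have h : {U : Set V | U ⊆ B} = insert ∅ {U : Set V | U ⊆ B ∧ U.Nonempty} := by
    ext U
    simp only [Set.mem_setOf_eq, Set.mem_insert_iff]
    constructor
    · intro h
      rcases U.eq_empty_or_nonempty with rfl | hne
      · exact Or.inl rfl
      · exact Or.inr ⟨h, hne⟩
    · rintro (rfl | ⟨h, _⟩)
      · exact Set.empty_subset _
      · exact h
  have hne : (∅ : Set V) ∉ {U : Set V | U ⊆ B ∧ U.Nonempty} := by
    simp [Set.not_nonempty_empty]
  rw [← ncard_subsets, h, Set.ncard_insert_of_notMem hne (Set.toFinite _)]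

lemma ncard_family {x : V} {A B : Set V} (hx : x ∈ A) (hd : Disjoint A B) :
    {T : Set V | x ∈ T ∧ T ⊆ A ∪ B ∧ (T ∩ B).Nonempty}.ncard
      = 2 ^ (A \ {x}).ncard * ({U : Set V | U ⊆ B ∧ U.Nonempty}).ncard := by
  classical
  have hxB : x ∉ B := fun h => (hd.ne_of_mem hx h) rfl
  have e : {T : Set V | x ∈ T ∧ T ⊆ A ∪ B ∧ (T ∩ B).Nonempty} ≃
      {P : Set V | P ⊆ A \ {x}} × {U : Set V | U ⊆ B ∧ U.Nonempty} := by
    refine ⟨fun T => (⟨(T : Set V) ∩ (A \ {x}), Set.inter_subset_right⟩,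
        ⟨(T : Set V) ∩ B, Set.inter_subset_right, T.2.2.2⟩),
      fun PQ => ⟨insert x ((PQ.1 : Set V) ∪ (PQ.2 : Set V)), ?_, ?_, ?_⟩, ?_, ?_⟩
    · exact Set.mem_insert _ _
    · rintro u (rfl | hu)
      · exact Or.inl hx
      · rcases hu with hu | hu
        · exact Or.inl ((PQ.1.2 hu).1)
        · exact Or.inr (PQ.2.2.1 hu)
    · obtain ⟨u, hu⟩ := PQ.2.2.2
      exact ⟨u, Set.mem_insert_of_mem _ (Or.inr hu), PQ.2.2.1 hu⟩
    · rintro ⟨T, hxT, hTsub, hTne⟩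
      ext u
      simp only [Set.mem_insert_iff, Set.mem_union, Set.mem_inter_iff, Set.mem_diff,
        Set.mem_singleton_iff]
      constructor
      · rintro (rfl | ⟨hu, _⟩ | ⟨hu, _⟩) <;> first | exact hxT | exact hu
      · intro hu
        by_cases hux : u = x
        · exact Or.inl hux
        · rcases hTsub hu with h | h
          · exact Or.inr (Or.inl ⟨hu, h, hux⟩)
          · exact Or.inr (Or.inr ⟨hu, h⟩)
    · rintro ⟨⟨P, hP⟩, ⟨Q, hQ, hQne⟩⟩
      have h1 : insert x (P ∪ Q) ∩ (A \ {x}) = P := by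
        ext u
        simp only [Set.mem_inter_iff, Set.mem_insert_iff, Set.mem_union, Set.mem_diff,
          Set.mem_singleton_iff]
        constructor
        · rintro ⟨rfl | hu | hu, huA, hux⟩
          · exact absurd rfl hux
          · exact hu
          · exact absurd rfl (hd.ne_of_mem huA (hQ hu))
        · intro hu
          exact ⟨Or.inr (Or.inl hu), hP hu⟩
      have h2 : insert x (P ∪ Q) ∩ B = Q := by
        ext u
        simp only [Set.mem_inter_iff, Set.mem_insert_iff, Set.mem_union]
        constructor
        · rintro ⟨rfl | hu | hu, huB⟩
          · exact absurd huB hxB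
          · exact absurd huB (fun h => hd.ne_of_mem (hP hu).1 h rfl)
          · exact hu
        · intro hu
          exact ⟨Or.inr (Or.inr hu), hQ hu⟩
      simp only [Prod.mk.injEq, Subtype.mk.injEq]
      exact ⟨h1, h2⟩
  rw [← Nat.card_coe_set_eq, Nat.card_congr e, Nat.card_prod,
    Nat.card_coe_set_eq, Nat.card_coe_set_eq, ncard_subsets]

lemma not_connected_of_isolated {G : SimpleGraph V} {T : Set V} {v w : V}
    (hv : v ∈ T) (hw : w ∈ T) (hvw : v ≠ w) (hiso : ∀ u ∈ T, ¬ G.Adj v u) :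
    ¬ (G.induce T).Connected := by
  intro h
  obtain ⟨p⟩ := h.preconnected ⟨v, hv⟩ ⟨w, hw⟩
  cases p with
  | nil => exact hvw rfl
  | cons hadj p' =>
    rename_i u
    exact hiso u.1 u.2 (by simpa using hadj)

lemma walk_closed {G : SimpleGraph V} {T : Set V} {A : Set V}
    (hcl : ∀ u z, u ∈ A → z ∈ T → G.Adj u z → z ∈ A) :
    ∀ {u v : ↥T} (_ : (G.induce T).Walk u v), u.1 ∈ A → v.1 ∈ A := by
  intro u v p
  induction p with
  | nil => exact id
  | @cons a b c hadj p ih =>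
    intro ha
    exact ih (hcl a.1 b.1 ha b.2 (by simpa using hadj))

lemma gnd_adj_some_some {m x : ℕ} {i j : Fin m} :
    (Gnd m x).Adj (some i) (some j) ↔ i ≠ j := by
  simp [Gnd, SimpleGraph.fromRel_adj]

lemma gnd_adj_none_some {m x : ℕ} {i : Fin m} :
    (Gnd m x).Adj none (some i) ↔ i.val < x := by
  simp [Gnd, SimpleGraph.fromRel_adj]

lemma gnd_not_adj_none_none {m x : ℕ} : ¬ (Gnd m x).Adj none none := by
  simp [Gnd, SimpleGraph.fromRel_adj]

lemma gnd_connected_no_none {m x : ℕ} {S : Set (Option (Fin m))} (hne : S.Nonempty)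
    (hnone : none ∉ S) : ((Gnd m x).induce S).Connected := by
  rw [SimpleGraph.connected_iff]
  refine ⟨?_, ⟨⟨hne.choose, hne.choose_spec⟩⟩⟩
  rintro ⟨u, hu⟩ ⟨v, hv⟩
  by_cases huv : u = v
  · subst huv; rfl
  · refine SimpleGraph.Adj.reachable ?_
    have : ∀ w ∈ S, ∃ i : Fin m, w = some i := by
      rintro (_ | i) hw
      · exact absurd hw hnone
      · exact ⟨i, rfl⟩
    obtain ⟨i, rfl⟩ := this u hu
    obtain ⟨j, rfl⟩ := this v hv
    simp only [SimpleGraph.comap_adj, Function.Embedding.coe_subtype]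
    exact gnd_adj_some_some.2 (fun h => huv (by rw [h]))

lemma gnd_connected_with_nbr {m x : ℕ} {S : Set (Option (Fin m))} {j : Fin m}
    (hj : some j ∈ S) (hjx : j.val < x) : ((Gnd m x).induce S).Connected := by
  rw [SimpleGraph.connected_iff]
  refine ⟨?_, ⟨⟨some j, hj⟩⟩⟩
  have key : ∀ u : ↥S, ((Gnd m x).induce S).Reachable u ⟨some j, hj⟩ := by
    rintro ⟨(_ | i), hu⟩
    · refine SimpleGraph.Adj.reachable ?_
      simp only [SimpleGraph.comap_adj, Function.Embedding.coe_subtype]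
      exact gnd_adj_none_some.2 hjx
    · by_cases hij : i = j
      · subst hij; rfl
      · refine SimpleGraph.Adj.reachable ?_
        simp only [SimpleGraph.comap_adj, Function.Embedding.coe_subtype]
        exact gnd_adj_some_some.2 hij
  intro u v
  exact (key u).trans (key v).symm

lemma gnd_singleton_connected {m x : ℕ} :
    ((Gnd m x).induce {(none : Option (Fin m))}).Connected := by
  rw [SimpleGraph.connected_iff]
  refine ⟨?_, ⟨⟨none, rfl⟩⟩⟩
  rintro ⟨u, hu⟩ ⟨v, hv⟩
  simp only [Set.mem_singleton_iff] at hu hv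
  subst hu; subst hv; rfl

lemma gnd_disc_eq {m x : ℕ} :
    {S : Set (Option (Fin m)) | S.Nonempty ∧ ¬ ((Gnd m x).induce S).Connected}
      = (insert none) '' {U : Set (Option (Fin m)) |
          U ⊆ {w | ∃ i : Fin m, x ≤ i.val ∧ w = some i} ∧ U.Nonempty} := by
  ext S
  simp only [Set.mem_setOf_eq, Set.mem_image]
  constructor
  · rintro ⟨hne, hdisc⟩
    -- none must be in S
    by_cases hnone : none ∈ S
    · -- no neighbour of none in S
      have hnonbr : ∀ i : Fin m, i.val < x → some i ∉ S := by
        intro i hi hiS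
        exact hdisc (gnd_connected_with_nbr hiS hi)
      -- S ≠ {none}
      have hSne : S ≠ {(none : Option (Fin m))} := by
        rintro rfl
        exact hdisc gnd_singleton_connected
      refine ⟨S \ {none}, ⟨?_, ?_⟩, ?_⟩
      · rintro (_ | i) ⟨hw, hw2⟩
        · exact absurd rfl hw2
        · refine ⟨i, ?_, rfl⟩
          by_contra hlt
          exact hnonbr i (by omega) hw
      · rw [Set.nonempty_iff_ne_empty]
        intro hdiff
        apply hSne
        apply Set.eq_singleton_iff_unique_mem.2 ⟨hnone, ?_⟩
        intro u huS
        by_contra hu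
        exact (Set.eq_empty_iff_forall_notMem.1 hdiff u) ⟨huS, hu⟩
      · rw [Set.insert_diff_singleton, Set.insert_eq_of_mem hnone]
    · exact absurd (gnd_connected_no_none hne hnone) hdisc
  · rintro ⟨U, ⟨hU, ⟨u, hu⟩⟩, rfl⟩
    obtain ⟨i, hix, rfl⟩ := hU hu
    refine ⟨⟨none, Set.mem_insert _ _⟩, ?_⟩
    refine not_connected_of_isolated (Set.mem_insert _ _) (Set.mem_insert_of_mem _ hu)
      (by simp) ?_
    rintro (_ | j) hw hadj
    · exact gnd_not_adj_none_none hadj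
    · obtain ⟨k, hkx, hk⟩ : ∃ k : Fin m, x ≤ k.val ∧ some j = some k := by
        rcases hw with h | h
        · exact absurd h.symm (by simp)
        · exact hU h
      obtain rfl : j = k := by injection hk
      exact absurd (gnd_adj_none_some.1 hadj) (by omega)

lemma numConnSub_add {V : Type*} [Fintype V] (G : SimpleGraph V) :
    numConnSub G + {S : Set V | S.Nonempty ∧ ¬ (G.induce S).Connected}.ncard + 1
      = 2 ^ Fintype.card V := by
  classical
  have hu : {S : Set V | S.Nonempty ∧ (G.induce S).Connected}
      ∪ {S : Set V | S.Nonempty ∧ ¬ (G.induce S).Connected}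
      = {S : Set V | S ⊆ Set.univ ∧ S.Nonempty} := by
    ext S
    simp only [Set.mem_union, Set.mem_setOf_eq, Set.subset_univ, true_and]
    by_cases h : (G.induce S).Connected <;> by_cases h2 : S.Nonempty <;> tauto
  have hd : Disjoint {S : Set V | S.Nonempty ∧ (G.induce S).Connected}
      {S : Set V | S.Nonempty ∧ ¬ (G.induce S).Connected} := by
    rw [Set.disjoint_left]
    rintro S ⟨_, h⟩ ⟨_, h2⟩
    exact h2 h
  have := Set.ncard_union_eq hd (Set.toFinite _) (Set.toFinite _)
  rw [hu] at this
  rw [numConnSub, ← this, ncard_nonempty_subsets]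
  simp [Set.ncard_univ, Nat.card_eq_fintype_card]

lemma ncard_fin_ge (m x : ℕ) : {i : Fin m | x ≤ i.val}.ncard = m - x := by
  rw [← Nat.card_coe_set_eq]
  have e : {i : Fin m | x ≤ i.val} ≃ Fin (m - x) := by
    refine ⟨fun i => ⟨i.1.val - x, by have h1 := i.1.isLt; have h2 := i.2; simp only [Set.mem_setOf_eq] at h2; omega⟩,
      fun j => ⟨⟨x + j.val, by have := j.isLt; omega⟩, by simp only [Set.mem_setOf_eq]; omega⟩, ?_, ?_⟩
    · rintro ⟨⟨i, him⟩, hi⟩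
      simp only [Set.mem_setOf_eq] at hi
      apply Subtype.ext
      apply Fin.ext
      simp only
      omega
    · rintro ⟨j, hj⟩
      apply Fin.ext
      simp only
      omega
  rw [Nat.card_congr e, Nat.card_eq_fintype_card, Fintype.card_fin]

lemma gnd_count (m x : ℕ) : numConnSub (Gnd m x) + 2 ^ (m - x) = 2 ^ (m + 1) := by
  classical
  have h1 := numConnSub_add (Gnd m x)
  rw [Fintype.card_option, Fintype.card_fin] at h1
  set NN : Set (Option (Fin m)) := {w | ∃ i : Fin m, x ≤ i.val ∧ w = some i} with hNN
  have hNNcard : NN.ncard = m - x := by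
    have : NN = (fun i : Fin m => some i) '' {i : Fin m | x ≤ i.val} := by
      ext w
      simp only [hNN, Set.mem_setOf_eq, Set.mem_image]
      constructor
      · rintro ⟨i, hi, rfl⟩; exact ⟨i, hi, rfl⟩
      · rintro ⟨i, hi, rfl⟩; exact ⟨i, hi, rfl⟩
    rw [this, Set.ncard_image_of_injective _ (Option.some_injective _), ncard_fin_ge]
  have hdisc : {S : Set (Option (Fin m)) | S.Nonempty ∧ ¬ ((Gnd m x).induce S).Connected}.ncard
      + 1 = 2 ^ (m - x) := by
    rw [gnd_disc_eq]
    have hinj : Set.InjOn (insert (none : Option (Fin m)))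
        {U : Set (Option (Fin m)) | U ⊆ NN ∧ U.Nonempty} := by
      intro U1 h1' U2 h2' heq
      have hn1 : (none : Option (Fin m)) ∉ U1 := fun h => by
        obtain ⟨i, _, hi⟩ := h1'.1 h; exact (by simp : (none : Option (Fin m)) ≠ some i) hi
      have hn2 : (none : Option (Fin m)) ∉ U2 := fun h => by
        obtain ⟨i, _, hi⟩ := h2'.1 h; exact (by simp : (none : Option (Fin m)) ≠ some i) hi
      ext u
      constructor
      · intro hu
        have : u ∈ insert none U2 := heq ▸ Set.mem_insert_of_mem _ hu
        rcases this with rfl | h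
        · exact absurd hu hn1
        · exact h
      · intro hu
        have : u ∈ insert none U1 := heq ▸ Set.mem_insert_of_mem _ hu
        rcases this with rfl | h
        · exact absurd hu hn2
        · exact h
    rw [Set.ncard_image_of_injOn hinj, ncard_nonempty_subsets, hNNcard]
  omega

lemma iso_of_structure {V : Type*} [Fintype V] (G : SimpleGraph V) (n c : ℕ)
    (hn : Fintype.card V = n) (hn2 : 2 ≤ n) (x : V) (s : Finset V) (hxs : x ∉ s)
    (hsc : s.card = c)
    (hcomp : ∀ p q : V, p ≠ x → q ≠ x → p ≠ q → G.Adj p q)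
    (hadj : ∀ u : V, G.Adj x u ↔ u ∈ s) :
    Nonempty (G ≃g Gnd (n - 1) c) := by
  classical
  have hcle : c ≤ n - 1 := by
    have hsub : s ⊆ Finset.univ.erase x := fun u hu =>
      Finset.mem_erase.2 ⟨fun h => hxs (h ▸ hu), Finset.mem_univ u⟩
    have := Finset.card_le_card hsub
    rw [Finset.card_erase_of_mem (Finset.mem_univ x), Finset.card_univ, hn, hsc] at this
    omega
  set t : Finset V := Finset.univ \ insert x s with ht
  have hmemt : ∀ w : V, w ≠ x → w ∉ s → w ∈ t := by
    intro w h1 h2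
    rw [ht]
    simp [Finset.mem_sdiff, h1, h2]
  have htcard : t.card = n - 1 - c := by
    rw [ht, Finset.card_sdiff_of_subset (Finset.subset_univ _), Finset.card_univ, hn,
      Finset.card_insert_of_notMem hxs, hsc]
    omega
  have e1 : ↥s ≃ Fin c := s.equivFin.trans (finCongr hsc)
  have e2 : ↥t ≃ Fin (n - 1 - c) := t.equivFin.trans (finCongr htcard)
  set f : V → Option (Fin (n - 1)) := fun w =>
    if h : w = x then none
    else if hs : w ∈ s then some ⟨(e1 ⟨w, hs⟩).val, lt_of_lt_of_le (e1 ⟨w, hs⟩).isLt hcle⟩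
    else some ⟨c + (e2 ⟨w, hmemt w h hs⟩).val, by
        have := (e2 ⟨w, hmemt w h hs⟩).isLt
        omega⟩ with hf
  have hfx : f x = none := by simp [hf]
  have hfs : ∀ (w : V) (hw : w ≠ x) (hs : w ∈ s),
      f w = some ⟨(e1 ⟨w, hs⟩).val, lt_of_lt_of_le (e1 ⟨w, hs⟩).isLt hcle⟩ := by
    intro w hw hs
    simp only [hf]
    rw [dif_neg hw, dif_pos hs]
  have hft : ∀ (w : V) (hw : w ≠ x) (hs : w ∉ s),
      f w = some ⟨c + (e2 ⟨w, hmemt w hw hs⟩).val, by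
        have := (e2 ⟨w, hmemt w hw hs⟩).isLt; omega⟩ := by
    intro w hw hs
    simp only [hf]
    rw [dif_neg hw, dif_neg hs]
  have hval : ∀ (w : V), w ≠ x → ∃ v : Fin (n - 1), f w = some v ∧ (v.val < c ↔ w ∈ s) := by
    intro w hw
    by_cases hs : w ∈ s
    · exact ⟨_, hfs w hw hs, by simp only [hs, iff_true]; exact (e1 ⟨w, hs⟩).isLt⟩
    · exact ⟨_, hft w hw hs, by simp only [hs, iff_false, not_lt]; exact Nat.le_add_right _ _⟩
  have hinj : Function.Injective f := by
    intro a b hab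
    by_cases ha : a = x <;> by_cases hb : b = x
    · rw [ha, hb]
    · obtain ⟨v, hv, _⟩ := hval b hb
      rw [ha, hfx, hv] at hab
      exact absurd hab (by simp)
    · obtain ⟨v, hv, _⟩ := hval a ha
      rw [hb, hfx, hv] at hab
      exact absurd hab (by simp)
    · by_cases has : a ∈ s <;> by_cases hbs : b ∈ s
      · rw [hfs a ha has, hfs b hb hbs] at hab
        have h1 : e1 ⟨a, has⟩ = e1 ⟨b, hbs⟩ := by
          apply Fin.ext
          have h2 := Option.some_injective _ hab
          exact Fin.mk.inj_iff.mp h2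
        exact congrArg Subtype.val (e1.injective h1)
      · obtain ⟨v, hv, hvc⟩ := hval a ha
        obtain ⟨w, hw, hwc⟩ := hval b hb
        rw [hv, hw] at hab
        obtain rfl : v = w := by injection hab
        exact absurd (hwc.1 (hvc.2 has)) hbs
      · obtain ⟨v, hv, hvc⟩ := hval a ha
        obtain ⟨w, hw, hwc⟩ := hval b hb
        rw [hv, hw] at hab
        obtain rfl : v = w := by injection hab
        exact absurd (hvc.1 (hwc.2 hbs)) has
      · rw [hft a ha has, hft b hb hbs] at hab
        have h1 : e2 ⟨a, hmemt a ha has⟩ = e2 ⟨b, hmemt b hb hbs⟩ := by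
          apply Fin.ext
          have h2 := congrArg Fin.val (Option.some_injective _ hab)
          simp only [] at h2
          omega
        exact congrArg Subtype.val (e2.injective h1)
  have hbij : Function.Bijective f := by
    rw [Fintype.bijective_iff_injective_and_card]
    refine ⟨hinj, ?_⟩
    rw [hn, Fintype.card_option, Fintype.card_fin]
    omega
  refine ⟨⟨Equiv.ofBijective f hbij, ?_⟩⟩
  intro a b
  simp only [Equiv.ofBijective_apply]
  by_cases ha : a = x <;> by_cases hb : b = x
  · rw [ha, hb, hfx]
    simp only [SimpleGraph.irrefl, iff_false]
  · obtain ⟨v, hv, hvc⟩ := hval b hb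
    rw [ha, hfx, hv, gnd_adj_none_some, hvc, hadj]
  · obtain ⟨v, hv, hvc⟩ := hval a ha
    rw [hb, hfx, hv, (Gnd (n-1) c).adj_comm, G.adj_comm, gnd_adj_none_some, hvc, hadj]
  · obtain ⟨v, hv, hvc⟩ := hval a ha
    obtain ⟨w, hw, hwc⟩ := hval b hb
    rw [hv, hw, gnd_adj_some_some]
    constructor
    · intro hvw
      refine hcomp a b ha hb ?_
      rintro rfl
      exact hvw (by rw [hv] at hw; injection hw)
    · intro hAdj hvw
      have : a = b := hinj (by rw [hv, hw, hvw])
      exact G.irrefl (this ▸ hAdj)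

lemma ncard_compl_coe (s : Finset V) (n : ℕ) (hn : Fintype.card V = n) :
    ((↑s : Set V)ᶜ).ncard = n - s.card := by
  have h := Set.ncard_add_ncard_compl (↑s : Set V)
  rw [Set.ncard_coe_finset, Nat.card_eq_fintype_card, hn] at h
  omega

/-- The singleton-component case. -/

lemma singleton_case (G : SimpleGraph V) (n c : ℕ) (hn : Fintype.card V = n)
    (hn2 : 2 ≤ n) (hcn : c + 2 ≤ n) (s : Finset V) (hsc : s.card = c) (x : V)
    (hx : x ∈ (↑s : Set V)ᶜ)
    (hxiso : ∀ u ∈ (↑s : Set V)ᶜ \ {x}, ¬ G.Adj x u)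
    (hKne : ((↑s : Set V)ᶜ \ {x}).Nonempty)
    (hiso : IsEmpty (G ≃g Gnd (n - 1) c)) :
    2 ^ (n - 1 - c) ≤ {S : Set V | S.Nonempty ∧ ¬ (G.induce S).Connected}.ncard := by
  classical
  set K : Set V := (↑s : Set V)ᶜ with hK
  set B : Set V := K \ {x} with hB
  set F : Set (Set V) := {T : Set V | x ∈ T ∧ T ⊆ K ∧ (T ∩ B).Nonempty} with hF
  have hxs : x ∉ s := by rwa [hK, Set.mem_compl_iff, Finset.mem_coe] at hx
  -- count F
  have hFcard : F.ncard = {U : Set V | U ⊆ B ∧ U.Nonempty}.ncard := by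
    have hd : Disjoint ({x} : Set V) B := by
      rw [Set.disjoint_left]
      rintro u rfl hu
      exact hu.2 rfl
    have hun : ({x} : Set V) ∪ B = K := by
      rw [hB, Set.union_diff_self]
      exact Set.union_eq_self_of_subset_left (by simpa using hx)
    have := ncard_family (Set.mem_singleton x) hd
    rw [hun] at this
    rw [hF, this]
    simp
  have hBcard : B.ncard + 1 + c = n := by
    have h1 : K.ncard = n - c := by rw [hK, ncard_compl_coe s n hn, hsc]
    have h2 : B.ncard + 1 = K.ncard :=
      Set.ncard_diff_singleton_add_one (by simpa using hx) (Set.toFinite _)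
    omega
  -- F consists of disconnected sets
  have hFsub : F ⊆ {S : Set V | S.Nonempty ∧ ¬ (G.induce S).Connected} := by
    rintro T ⟨hxT, hTK, ⟨w, hwT, hwB⟩⟩
    refine ⟨⟨x, hxT⟩, ?_⟩
    refine not_connected_of_isolated hxT hwT (fun h => hwB.2 (by rw [← h]; rfl)) ?_
    intro u huT hadj
    by_cases hux : u = x
    · exact G.irrefl (hux ▸ hadj)
    · exact hxiso u ⟨hTK huT, hux⟩ hadj
  -- the extra disconnected set
  obtain ⟨E, hEdisc, hEne, hEF⟩ :
      ∃ E : Set V, (¬ (G.induce E).Connected) ∧ E.Nonempty ∧ E ∉ F := by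
    by_cases hcomp : ∀ p q : V, p ≠ x → q ≠ x → p ≠ q → G.Adj p q
    · by_cases hadj2 : ∀ u ∈ s, G.Adj x u
      · exfalso
        refine hiso.false ?_
        have hadj3 : ∀ u : V, G.Adj x u ↔ u ∈ s := by
          intro u
          constructor
          · intro h
            by_contra hus
            have hux : u ≠ x := fun he => G.irrefl (he ▸ h)
            exact hxiso u ⟨(by simpa using hus : u ∈ (↑s : Set V)ᶜ), hux⟩ h
          · exact hadj2 u
        exact (iso_of_structure G n c hn hn2 x s hxs hsc hcomp hadj3).some
      · push_neg at hadj2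
        obtain ⟨u, hus, hu⟩ := hadj2
        have hux : x ≠ u := fun he => hxs (he ▸ hus)
        refine ⟨{x, u}, ?_, ⟨x, Or.inl rfl⟩, ?_⟩
        · refine not_connected_of_isolated (Or.inl rfl) (Or.inr rfl) hux ?_
          rintro w (rfl | rfl)
          · exact G.irrefl
          · exact hu
        · rintro ⟨-, hTK, -⟩
          exact (hTK (Or.inr rfl)) (Finset.mem_coe.2 hus)
    · push_neg at hcomp
      obtain ⟨p, q, hp, hq, hpq, hnadj⟩ := hcomp
      refine ⟨{p, q}, ?_, ⟨p, Or.inl rfl⟩, ?_⟩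
      · refine not_connected_of_isolated (Or.inl rfl) (Or.inr rfl) hpq ?_
        rintro w (rfl | rfl)
        · exact G.irrefl
        · exact hnadj
      · rintro ⟨hxT, -, -⟩
        rcases hxT with rfl | rfl
        · exact hp rfl
        · exact hq rfl
  -- conclude
  have hsub2 : insert E F ⊆ {S : Set V | S.Nonempty ∧ ¬ (G.induce S).Connected} := by
    rintro T (rfl | hT)
    · exact ⟨hEne, hEdisc⟩
    · exact hFsub hT
  have hle := Set.ncard_le_ncard hsub2 (Set.toFinite _)
  rw [Set.ncard_insert_of_notMem hEF (Set.toFinite _), hFcard] at hle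
  have := ncard_nonempty_subsets B
  have hexp : n - 1 - c = B.ncard := by omega
  rw [hexp]
  omega

/-- The case where both sides have at least two vertices. -/

lemma twoside_case (G : SimpleGraph V) (n c : ℕ) (hn : Fintype.card V = n)
    (s : Finset V) (hsc : s.card = c) (A B : Set V)
    (hAB : A ∪ B = (↑s : Set V)ᶜ) (hd : Disjoint A B)
    {x y : V} (hx : x ∈ A) (hy : y ∈ B) (hA2 : 2 ≤ A.ncard) (hB2 : 2 ≤ B.ncard)
    (hdisc : ∀ T : Set V, T ⊆ (↑s : Set V)ᶜ → (T ∩ A).Nonempty → (T ∩ B).Nonempty →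
      ¬ (G.induce T).Connected) :
    2 ^ (n - 1 - c) ≤ {S : Set V | S.Nonempty ∧ ¬ (G.induce S).Connected}.ncard := by
  classical
  set K : Set V := (↑s : Set V)ᶜ with hK
  set F1 : Set (Set V) := {T : Set V | x ∈ T ∧ T ⊆ K ∧ (T ∩ B).Nonempty} with hF1
  set F2 : Set (Set V) := {T : Set V | y ∈ T ∧ T ⊆ B ∪ (A \ {x}) ∧ (T ∩ (A \ {x})).Nonempty}
    with hF2
  have hxK : x ∈ K := hAB ▸ Or.inl hx
  have hyK : y ∈ K := hAB ▸ Or.inr hy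
  have hxy : x ≠ y := fun h => hd.ne_of_mem hx hy h
  have hF1card : F1.ncard = 2 ^ (A \ {x}).ncard * {U : Set V | U ⊆ B ∧ U.Nonempty}.ncard := by
    have := ncard_family hx hd
    rw [hAB] at this
    exact this
  have hdd : Disjoint B (A \ {x}) := (hd.symm).mono_right Set.diff_subset
  have hF2card : F2.ncard
      = 2 ^ (B \ {y}).ncard * {U : Set V | U ⊆ A \ {x} ∧ U.Nonempty}.ncard :=
    ncard_family hy hdd
  -- both families consist of disconnected sets
  have hF1sub : F1 ⊆ {S : Set V | S.Nonempty ∧ ¬ (G.induce S).Connected} := by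
    rintro T ⟨hxT, hTK, hTB⟩
    exact ⟨⟨x, hxT⟩, hdisc T hTK ⟨x, hxT, hx⟩ hTB⟩
  have hF2sub : F2 ⊆ {S : Set V | S.Nonempty ∧ ¬ (G.induce S).Connected} := by
    rintro T ⟨hyT, hTsub, hTA⟩
    have hTK : T ⊆ K := by
      intro u hu
      rcases hTsub hu with h | h
      · exact hAB ▸ Or.inr h
      · exact hAB ▸ Or.inl h.1
    exact ⟨⟨y, hyT⟩, hdisc T hTK (hTA.mono (Set.inter_subset_inter_right _ Set.diff_subset))
      ⟨y, hyT, hy⟩⟩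
  have hdisjF : Disjoint F1 F2 := by
    rw [Set.disjoint_left]
    rintro T ⟨hxT, -, -⟩ ⟨-, hTsub, -⟩
    rcases hTsub hxT with h | h
    · exact hd.ne_of_mem hx h rfl
    · exact h.2 rfl
  have hsub : F1 ∪ F2 ⊆ {S : Set V | S.Nonempty ∧ ¬ (G.induce S).Connected} :=
    Set.union_subset hF1sub hF2sub
  have hle := Set.ncard_le_ncard hsub (Set.toFinite _)
  rw [Set.ncard_union_eq hdisjF (Set.toFinite _) (Set.toFinite _)] at hle
  -- arithmetic
  have ha' : (A \ {x}).ncard + 1 = A.ncard :=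
    Set.ncard_diff_singleton_add_one hx (Set.toFinite _)
  have hb' : (B \ {y}).ncard + 1 = B.ncard :=
    Set.ncard_diff_singleton_add_one hy (Set.toFinite _)
  have habn : A.ncard + B.ncard + c = n := by
    have h1 : K.ncard = n - c := by rw [hK, ncard_compl_coe s n hn, hsc]
    have h2 := Set.ncard_union_eq hd (Set.toFinite A) (Set.toFinite B)
    rw [hAB] at h2
    have h3 : c ≤ n := by
      have := Set.ncard_add_ncard_compl (↑s : Set V)
      rw [Set.ncard_coe_finset, Nat.card_eq_fintype_card, hn, hsc] at this
      omega
    omega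
  have hPB := ncard_nonempty_subsets B
  have hPA := ncard_nonempty_subsets (A \ {x})
  set a' := (A \ {x}).ncard
  set b' := (B \ {y}).ncard
  set PB := {U : Set V | U ⊆ B ∧ U.Nonempty}.ncard
  set PA := {U : Set V | U ⊆ A \ {x} ∧ U.Nonempty}.ncard
  have ha1 : 1 ≤ a' := by omega
  have hb1 : 1 ≤ b' := by omega
  have hBpow : 2 ^ B.ncard = 2 * 2 ^ b' := by
    rw [← hb', pow_succ]
    ring
  have hexp : n - 1 - c = a' + b' + 1 := by omega
  rw [hexp]
  have hα : 2 ≤ 2 ^ a' := by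
    calc (2:ℕ) = 2 ^ 1 := (pow_one 2).symm
    _ ≤ 2 ^ a' := Nat.pow_le_pow_right (by norm_num) ha1
  have hβ : 2 ≤ 2 ^ b' := by
    calc (2:ℕ) = 2 ^ 1 := (pow_one 2).symm
    _ ≤ 2 ^ b' := Nat.pow_le_pow_right (by norm_num) hb1
  have key : 2 ^ (a' + b' + 1) ≤ 2 ^ a' * PB + 2 ^ b' * PA := by
    have e1 : PB + 1 = 2 * 2 ^ b' := by rw [hPB, hBpow]
    have e2 : PA + 1 = 2 ^ a' := hPA
    have : 2 ^ (a' + b' + 1) = 2 * (2 ^ a' * 2 ^ b') := by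
      rw [pow_succ, pow_add]
      ring
    rw [this]
    nlinarith [hα, hβ]
  calc 2 ^ (a' + b' + 1) ≤ 2 ^ a' * PB + 2 ^ b' * PA := key
    _ = F1.ncard + F2.ncard := by rw [hF1card, hF2card]
    _ ≤ _ := hle

end Aux

/-- Among graphs of order `n` with vertex connectivity `c ≤ n - 2`, `G_{n,c}` is the unique
maximiser of the number of connected induced subgraphs. -/
theorem numConnSub_lt_of_vertConn {V : Type*} [Fintype V] (G : SimpleGraph V)
    (n c : ℕ) (hn : Fintype.card V = n) (hc : vertConn G = c) (hcn : c ≤ n - 2)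
    (hiso : IsEmpty (G ≃g Gnd (n - 1) c)) :
    numConnSub G < numConnSub (Gnd (n - 1) c) := by
  classical
  -- the defining set of vertConn is nonempty
  have hVne : {k | ∃ s : Finset V, s.card = k ∧ ¬ (G.induce ((↑s : Set V)ᶜ)).Connected}.Nonempty := by
    refine ⟨n, Finset.univ, by rw [Finset.card_univ, hn], ?_⟩
    intro hcon
    have : ((↑(Finset.univ : Finset V) : Set V)ᶜ) = ∅ := by simp
    rw [this] at hcon
    obtain ⟨⟨v, hv⟩⟩ := hcon.nonempty
    exact hv
  have hcmem := Nat.sInf_mem hVne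
  rw [vertConn] at hc
  rw [hc] at hcmem
  obtain ⟨s, hsc, hsdisc⟩ := hcmem
  -- case n = 0
  rcases Nat.lt_or_ge n 2 with hnsmall | hn2
  · interval_cases n
    · -- n = 0 : V empty
      have hVempty : IsEmpty V := by
        rw [← Fintype.card_eq_zero_iff, hn]
      have h0 : numConnSub G = 0 := by
        rw [numConnSub]
        convert Set.ncard_empty (Set V)
        ext S
        simp only [Set.mem_setOf_eq, Set.mem_empty_iff_false, iff_false, not_and]
        rintro ⟨v, -⟩
        exact (hVempty.false v).elim
      have h1 := gnd_count 0 c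
      have e2 : (0:ℕ) - c = 0 := by omega
      rw [e2] at h1
      norm_num at h1
      have e3 : (0:ℕ) - 1 = 0 := by norm_num
      rw [e3, h0]
      omega
    · -- n = 1 : contradiction, vertConn can't be 0
      exfalso
      have hc0 : c = 0 := by omega
      rw [hc0] at hsc
      have hs : s = ∅ := Finset.card_eq_zero.1 hsc
      rw [hs] at hsdisc
      apply hsdisc
      have hcompl : ((↑(∅ : Finset V) : Set V)ᶜ) = Set.univ := by simp
      rw [hcompl]
      obtain ⟨v, hv⟩ := Fintype.card_eq_one_iff.1 hn
      rw [SimpleGraph.connected_iff]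
      refine ⟨?_, ⟨⟨v, Set.mem_univ v⟩⟩⟩
      rintro ⟨a, -⟩ ⟨b, -⟩
      have : a = b := (hv a).trans (hv b).symm
      subst this
      rfl
  · -- main case : n ≥ 2
    have hcn2 : c + 2 ≤ n := by omega
    set K : Set V := (↑s : Set V)ᶜ with hK
    have hKcard : K.ncard + c = n := by
      have h := Set.ncard_add_ncard_compl (↑s : Set V)
      rw [Set.ncard_coe_finset, hsc, Nat.card_eq_fintype_card, hn, ← hK] at h
      omega
    have hKne : K.Nonempty := by
      rw [← Set.ncard_pos (Set.toFinite _)]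
      omega
    have : Nonempty ↥K := hKne.to_subtype
    rw [SimpleGraph.connected_iff] at hsdisc
    push_neg at hsdisc
    have hnprec : ¬ (G.induce K).Preconnected := fun h => (hsdisc h).false this.some
    rw [SimpleGraph.Preconnected] at hnprec
    push_neg at hnprec
    obtain ⟨x, y, hxy⟩ := hnprec
    -- the component of x
    set A : Set V := {u : V | ∃ h : u ∈ K, (G.induce K).Reachable x ⟨u, h⟩} with hA
    set B : Set V := K \ A with hB
    have hxA : x.1 ∈ A := ⟨x.2, by rfl⟩
    have hyB : y.1 ∈ B := by
      refine ⟨y.2, ?_⟩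
      rintro ⟨h, hr⟩
      exact hxy (by convert hr)
    have hASubK : A ⊆ K := fun u hu => hu.1
    have hAB : A ∪ B = K := by
      rw [hB, Set.union_diff_self]
      exact Set.union_eq_self_of_subset_left hASubK
    have hdAB : Disjoint A B := by
      rw [Set.disjoint_left]
      rintro u hu ⟨-, hu2⟩
      exact hu2 hu
    -- closure of A under adjacency within K
    have hcl : ∀ u z, u ∈ A → z ∈ K → G.Adj u z → z ∈ A := by
      rintro u z ⟨hu, hr⟩ hz hadj
      exact ⟨hz, hr.trans (SimpleGraph.Adj.reachable (by simpa using hadj))⟩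
    -- mixed subsets are disconnected
    have hdisc : ∀ T : Set V, T ⊆ K → (T ∩ A).Nonempty → (T ∩ B).Nonempty →
        ¬ (G.induce T).Connected := by
      rintro T hTK ⟨p, hpT, hpA⟩ ⟨q, hqT, hqB⟩ hcon
      obtain ⟨w⟩ := hcon.preconnected ⟨p, hpT⟩ ⟨q, hqT⟩
      have hclT : ∀ u z, u ∈ A → z ∈ T → G.Adj u z → z ∈ A :=
        fun u z hu hz hadj => hcl u z hu (hTK hz) hadj
      exact hqB.2 (walk_closed hclT w hpA)
    -- the key lower bound on disconnected sets
    have hDbound : 2 ^ (n - 1 - c)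
        ≤ {S : Set V | S.Nonempty ∧ ¬ (G.induce S).Connected}.ncard := by
      have hApos : 1 ≤ A.ncard := by
        rw [Nat.one_le_iff_ne_zero, Ne, Set.ncard_eq_zero (Set.toFinite _)]
        exact fun h => (h ▸ hxA : x.1 ∈ (∅ : Set V))
      have hBpos : 1 ≤ B.ncard := by
        rw [Nat.one_le_iff_ne_zero, Ne, Set.ncard_eq_zero (Set.toFinite _)]
        exact fun h => (h ▸ hyB : y.1 ∈ (∅ : Set V))
      by_cases hA1 : A.ncard = 1
      · -- A = {x}
        have hAx : A = {x.1} := by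
          obtain ⟨a, ha⟩ := Set.ncard_eq_one.1 hA1
          rw [ha]
          rw [ha] at hxA
          rw [Set.mem_singleton_iff] at hxA
          rw [hxA]
        refine singleton_case G n c hn hn2 hcn2 s hsc x.1 x.2 ?_ ?_ hiso
        · rintro u ⟨huK, hux⟩ hadj
          have : u ∈ A := hcl x.1 u hxA huK hadj
          rw [hAx] at this
          exact hux this
        · refine ⟨y.1, y.2, ?_⟩
          intro h
          rw [Set.mem_singleton_iff] at h
          exact hyB.2 (h ▸ hxA)
      · by_cases hB1 : B.ncard = 1
        · -- B = {y}
          have hBy : B = {y.1} := by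
            obtain ⟨b, hb⟩ := Set.ncard_eq_one.1 hB1
            rw [hb]
            rw [hb] at hyB
            rw [Set.mem_singleton_iff] at hyB
            rw [hyB]
          refine singleton_case G n c hn hn2 hcn2 s hsc y.1 y.2 ?_ ?_ hiso
          · rintro u ⟨huK, huy⟩ hadj
            have huA : u ∈ A := by
              rcases (hAB ▸ huK : u ∈ A ∪ B) with h | h
              · exact h
              · rw [hBy, Set.mem_singleton_iff] at h
                exact absurd h huy
            have : y.1 ∈ A := hcl u y.1 huA y.2 (G.adj_symm hadj)
            exact hyB.2 this
          · refine ⟨x.1, x.2, ?_⟩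
            intro h
            rw [Set.mem_singleton_iff] at h
            exact hyB.2 (h ▸ hxA)
        · exact twoside_case G n c hn s hsc A B hAB hdAB hxA hyB
            (by omega) (by omega) hdisc
    -- final arithmetic
    have h1 := numConnSub_add G
    rw [hn] at h1
    have h2 := gnd_count (n - 1) c
    have hn1 : n - 1 + 1 = n := by omega
    rw [hn1] at h2
    have hexp : n - 1 - c = n - 1 - c := rfl
    omega
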